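/- Let G = (A,B,C;E) be a bilaterally-complete tripartite graph with complete sides G[A∪B] and G[A∪C] and |A| = p. Then the bipartite graph G[B∪C] contains a subgraph F with exactly τ△(G) edges whose maximum degree is at most p. -/

import Mathlib

open SimpleGraph

variable {V : Type*}

/-- The set of edges of a triangle, given by its vertex set `t`:
all unordered pairs of distinct vertices of `t`. -/
def triangleEdges (t : Finset V) : Set (Sym2 V) :=
  {e | ∃ u ∈ t, ∃ v ∈ t, u ≠ v ∧ e = s(u, v)}

/-- `E'` is a `𝒯`-transversal of `G`: a set of edges of `G` meeting every triangle of `G`. -/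
def IsTriTransversal (G : SimpleGraph V) (E' : Set (Sym2 V)) : Prop :=
  E' ⊆ G.edgeSet ∧ ∀ t : Finset V, G.IsNClique 3 t → ∃ e ∈ triangleEdges t, e ∈ E'

/-- `τ△ G`: the minimum cardinality of a `𝒯`-transversal of `G`. -/
noncomputable def triTransversalNum (G : SimpleGraph V) : ℕ :=
  sInf {n | ∃ E' : Set (Sym2 V), IsTriTransversal G E' ∧ E'.ncard = n}

/-- `P` is a packing in `G`: a set of triangles of `G` that are pairwise edge-disjoint. -/
def IsTriPacking (G : SimpleGraph V) (P : Set (Finset V)) : Prop :=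
  (∀ t ∈ P, G.IsNClique 3 t) ∧
    P.Pairwise fun t t' => Disjoint (triangleEdges t) (triangleEdges t')

/-- `ν△ G`: the maximum cardinality of a packing of triangles in `G`. -/
noncomputable def triPackingNum (G : SimpleGraph V) : ℕ :=
  sSup {n | ∃ P : Set (Finset V), IsTriPacking G P ∧ P.ncard = n}

/-- The set of edges of `G` with one endpoint in `M` and the other in `W`. -/
def edgesBetween (G : SimpleGraph V) (M W : Set V) : Set (Sym2 V) :=
  {e | e ∈ G.edgeSet ∧ ∃ u ∈ M, ∃ w ∈ W, e = s(u, w)}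

/-- `G` is tripartite with parts `A`, `B`, `C`: the vertex set is partitioned into
the three independent sets `A`, `B`, `C`. -/
def IsTripartition (G : SimpleGraph V) (A B C : Set V) : Prop :=
  A ∪ B ∪ C = Set.univ ∧ Disjoint A B ∧ Disjoint A C ∧ Disjoint B C ∧
    (∀ u ∈ A, ∀ v ∈ A, ¬G.Adj u v) ∧ (∀ u ∈ B, ∀ v ∈ B, ¬G.Adj u v) ∧
    (∀ u ∈ C, ∀ v ∈ C, ¬G.Adj u v)

/-- The side `G[X ∪ Y]` of a tripartite graph is a complete bipartite graph. -/
def CompleteSide (G : SimpleGraph V) (X Y : Set V) : Prop :=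
  ∀ x ∈ X, ∀ y ∈ Y, G.Adj x y

/-- `W` is a vertex cover of the subgraph edge-induced by the edge set `Y`. -/
def CoversEdges (W : Set V) (Y : Set (Sym2 V)) : Prop :=
  ∀ e ∈ Y, ∃ v ∈ W, v ∈ e

/-- `M` is a matching consisting of edges from the edge set `F`:
the edges of `M` are pairwise vertex-disjoint. -/
def IsMatchingIn (F : Set (Sym2 V)) (M : Set (Sym2 V)) : Prop :=
  M ⊆ F ∧ M.Pairwise fun e f => ∀ v, v ∈ e → v ∉ f



private lemma exists_dup_split {α : Type*} :
    ∀ (m : List α), ¬ m.Nodup → ∃ (s₁ : List α) (x : α) (s₂ s₃ : List α),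
      m = s₁ ++ x :: s₂ ++ x :: s₃ := by
  intro m
  induction m with
  | nil => intro h; exact absurd List.nodup_nil h
  | cons a t ih =>
    intro h
    rw [List.nodup_cons] at h
    by_cases ha : a ∈ t
    · obtain ⟨s₂, s₃, rfl⟩ := List.append_of_mem ha
      exact ⟨[], a, s₂, s₃, rfl⟩
    · have ht : ¬ t.Nodup := fun hnd => h ⟨ha, hnd⟩
      obtain ⟨s₁, x, s₂, s₃, rfl⟩ := ih ht
      exact ⟨a :: s₁, x, s₂, s₃, rfl⟩

private lemma exists_nodup_chain' {α : Type*} (r : α → α → Prop) :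
    ∀ (n : ℕ) (m : List α), m.length ≤ n → m.Chain' r →
      ∃ m' : List α, m'.Chain' r ∧ m'.Nodup ∧ m'.head? = m.head? ∧
        m'.getLast? = m.getLast? := by
  intro n
  induction n with
  | zero =>
    intro m hm hc
    have : m = [] := List.eq_nil_of_length_eq_zero (Nat.le_zero.mp hm)
    subst this
    exact ⟨[], List.isChain_nil, List.nodup_nil, rfl, rfl⟩
  | succ n ih =>
    intro m hm hc
    by_cases hnd : m.Nodup
    · exact ⟨m, hc, hnd, rfl, rfl⟩
    · obtain ⟨s₁, x, s₂, s₃, rfl⟩ := exists_dup_split m hnd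
      have hm2 : s₁ ++ x :: s₂ ++ x :: s₃ = s₁ ++ (x :: s₂) ++ (x :: s₃) := by simp
      rw [hm2] at hc
      rw [List.Chain', List.isChain_append] at hc
      obtain ⟨hc1, hc2, hlink⟩ := hc
      rw [List.isChain_append] at hc1
      obtain ⟨hcs₁, hcx, hlink1⟩ := hc1
      have hcx3 : (x :: s₃).Chain' r := hc2
      have hch : (s₁ ++ x :: s₃).Chain' r := by
        rw [List.Chain', List.isChain_append]
        refine ⟨hcs₁, hcx3, ?_⟩
        intro a ha b hb
        simp only [List.head?_cons, Option.mem_def, Option.some.injEq] at hb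
        subst hb
        exact hlink1 a ha x (by simp)
      have hlen : (s₁ ++ x :: s₃).length ≤ n := by
        simp only [List.length_append, List.length_cons] at hm ⊢
        omega
      obtain ⟨m', h1, h2, h3, h4⟩ := ih (s₁ ++ x :: s₃) hlen hch
      refine ⟨m', h1, h2, ?_, ?_⟩
      · rw [h3]
        cases s₁ <;> simp
      · rw [h4, hm2]
        rw [List.getLast?_append, List.getLast?_append]
        obtain ⟨y, hy⟩ := Option.isSome_iff_exists.mp
          (List.getLast?_isSome.mpr (List.cons_ne_nil x s₃))
        rw [hy]
        simp [Option.or]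

attribute [local instance] Classical.propDecidable

private noncomputable def degf {V : Type*} (F : Finset (Sym2 V)) (v : V) : ℕ :=
  (F.filter (fun e => v ∈ e)).card

section degflemmas

variable {V : Type*} {F F' : Finset (Sym2 V)} {v : V} {e : Sym2 V}

private lemma degf_filter_eq (h : ∀ e : Sym2 V, v ∈ e → (e ∈ F ↔ e ∈ F')) :
    degf F v = degf F' v := by
  classical
  unfold degf
  congr 1
  ext e
  simp only [Finset.mem_filter]
  constructor
  · rintro ⟨h1, h2⟩; exact ⟨(h e h2).mp h1, h2⟩
  · rintro ⟨h1, h2⟩; exact ⟨(h e h2).mpr h1, h2⟩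

private lemma degf_mono (h : F ⊆ F') : degf F v ≤ degf F' v := by
  classical
  unfold degf
  exact Finset.card_le_card (Finset.filter_subset_filter _ h)

private lemma degf_insert_le : degf (insert e F) v ≤ degf F v + 1 := by
  classical
  unfold degf
  rw [Finset.filter_insert]
  split
  · exact Finset.card_insert_le _ _
  · omega

private lemma degf_insert_of_not_mem_vert (h : v ∉ e) : degf (insert e F) v = degf F v := by
  classical
  unfold degf
  rw [Finset.filter_insert, if_neg h]

private lemma degf_erase_le : degf (F.erase e) v ≤ degf F v := by
  classical
  exact degf_mono (Finset.erase_subset _ _)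

private lemma degf_erase_of_mem (he : e ∈ F) (hv : v ∈ e) :
    degf (F.erase e) v = degf F v - 1 := by
  classical
  unfold degf
  rw [Finset.filter_erase]
  rw [Finset.card_erase_of_mem (Finset.mem_filter.mpr ⟨he, hv⟩)]

private lemma degf_erase_of_not_mem_vert (h : v ∉ e) : degf (F.erase e) v = degf F v := by
  classical
  unfold degf
  rw [Finset.filter_erase]
  rw [Finset.erase_eq_of_notMem]
  intro hmem
  exact h (Finset.mem_filter.mp hmem).2

private lemma one_le_degf (he : e ∈ F) (hv : v ∈ e) : 1 ≤ degf F v := by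
  classical
  unfold degf
  exact Finset.card_pos.mpr ⟨e, Finset.mem_filter.mpr ⟨he, hv⟩⟩

private lemma ncard_sep_coe (F : Finset (Sym2 V)) (v : V) :
    {e ∈ (↑F : Set (Sym2 V)) | v ∈ e}.ncard = degf F v := by
  classical
  unfold degf
  rw [← Set.ncard_coe_finset]
  congr 1
  ext e
  simp [Finset.mem_filter]

end degflemmas

/-- The bipartite graph `G[B ∪ C]` of a bilaterally-complete tripartite graph `G`
with complete sides `G[A∪B]`, `G[A∪C]` and `|A| = p` contains a subgraph `F` with
exactly `τ△(G)` edges whose maximum degree is at most `p`. -/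
theorem exists_subgraph_tau_edges_maxdeg_le [Fintype V] (G : SimpleGraph V)
    (A B C : Set V) (hpart : IsTripartition G A B C)
    (hAB : CompleteSide G A B) (hAC : CompleteSide G A C)
    (p : ℕ) (hp : A.ncard = p) :
    ∃ F ⊆ edgesBetween G B C, F.ncard = triTransversalNum G ∧
      ∀ v : V, {e ∈ F | v ∈ e}.ncard ≤ p := by
  obtain ⟨hcov, hABd, hACd, hBCd, hAi, hBi, hCi⟩ := hpart
  set EHs : Set (Sym2 V) := edgesBetween G B C with hEHsdef
  have hEfin : EHs.Finite := Set.toFinite _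
  set EHf : Finset (Sym2 V) := hEfin.toFinset with hEHfdef
  have hmemEHf : ∀ e : Sym2 V, e ∈ EHf ↔ e ∈ EHs := fun e => Set.Finite.mem_toFinset _
  have hpartof : ∀ v : V, v ∈ A ∨ v ∈ B ∨ v ∈ C := by
    intro v
    have hv : v ∈ A ∪ B ∪ C := hcov ▸ Set.mem_univ v
    rcases hv with (h | h) | h
    exacts [Or.inl h, Or.inr (Or.inl h), Or.inr (Or.inr h)]
  have hAB' : ∀ {v : V}, v ∈ A → v ∈ B → False :=
    fun h1 h2 => Set.disjoint_left.mp hABd h1 h2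
  have hAC' : ∀ {v : V}, v ∈ A → v ∈ C → False :=
    fun h1 h2 => Set.disjoint_left.mp hACd h1 h2
  have hBC' : ∀ {v : V}, v ∈ B → v ∈ C → False :=
    fun h1 h2 => Set.disjoint_left.mp hBCd h1 h2
  have edge_struct : ∀ e ∈ EHs, ∃ b c, b ∈ B ∧ c ∈ C ∧ e = s(b, c) := by
    rintro e ⟨he, u, huB, w, hwC, rfl⟩
    exact ⟨u, w, huB, hwC, rfl⟩
  have tri_struct : ∀ t : Finset V, G.IsNClique 3 t →
      ∃ a b c, a ∈ A ∧ b ∈ B ∧ c ∈ C ∧ a ∈ t ∧ b ∈ t ∧ c ∈ t ∧ G.Adj b c := by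
    intro t ht
    rw [SimpleGraph.isNClique_iff] at ht
    obtain ⟨hclq, hcard⟩ := ht
    obtain ⟨x, y, z, hxy, hxz, hyz, rfl⟩ := Finset.card_eq_three.mp hcard
    have hxt : x ∈ ({x, y, z} : Finset V) := by simp
    have hyt : y ∈ ({x, y, z} : Finset V) := by simp
    have hzt : z ∈ ({x, y, z} : Finset V) := by simp
    have axy : G.Adj x y := hclq (by simp) (by simp) hxy
    have axz : G.Adj x z := hclq (by simp) (by simp) hxz
    have ayz : G.Adj y z := hclq (by simp) (by simp) hyz
    rcases hpartof x with hx | hx | hx <;> rcases hpartof y with hy | hy | hy <;>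
      rcases hpartof z with hz | hz | hz
    all_goals first
      | exact absurd axy (hAi _ hx _ hy)
      | exact absurd axz (hAi _ hx _ hz)
      | exact absurd ayz (hAi _ hy _ hz)
      | exact absurd axy (hBi _ hx _ hy)
      | exact absurd axz (hBi _ hx _ hz)
      | exact absurd ayz (hBi _ hy _ hz)
      | exact absurd axy (hCi _ hx _ hy)
      | exact absurd axz (hCi _ hx _ hz)
      | exact absurd ayz (hCi _ hy _ hz)
      | exact ⟨x, y, z, hx, hy, hz, hxt, hyt, hzt, ayz⟩
      | exact ⟨x, z, y, hx, hz, hy, hxt, hzt, hyt, ayz.symm⟩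
      | exact ⟨y, x, z, hy, hx, hz, hyt, hxt, hzt, axz⟩
      | exact ⟨y, z, x, hy, hz, hx, hyt, hzt, hxt, axz.symm⟩
      | exact ⟨z, x, y, hz, hx, hy, hzt, hxt, hyt, axy⟩
      | exact ⟨z, y, x, hz, hy, hx, hzt, hyt, hxt, axy.symm⟩
  have hAfin : A.Finite := Set.toFinite _
  set Af : Finset V := hAfin.toFinset with hAfdef
  have hAfcard : Af.card = p := by
    rw [← hp, Set.ncard_eq_toFinset_card A hAfin]
  -- Lemma A : transversal built from a vertex set W in B ∪ C
  have lemA : ∀ Wf : Finset V, (∀ w ∈ Wf, w ∈ B ∪ C) →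
      triTransversalNum G ≤ p * Wf.card +
        (EHf.filter (fun e => ∀ v ∈ Wf, ¬ v ∈ e)).card := by
    intro Wf hWf
    set T : Finset (Sym2 V) := EHf.filter (fun e => ∀ v ∈ Wf, ¬ v ∈ e) with hTdef
    set S : Finset (Sym2 V) := (Af ×ˢ Wf).image (fun q => s(q.1, q.2)) with hSdef
    have hTE : ∀ e ∈ T, e ∈ EHs := fun e he => (hmemEHf e).mp (Finset.mem_filter.mp he).1
    have htrans : IsTriTransversal G (↑T ∪ ↑S) := by
      constructor
      · intro e he
        rw [Set.mem_union] at he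
        rcases he with he | he
        · exact (hTE e he).1
        · rw [hSdef] at he
          simp only [Finset.coe_image, Set.mem_image, Finset.mem_coe,
            Finset.mem_product] at he
          obtain ⟨⟨a, w⟩, ⟨haA, hwW⟩, rfl⟩ := he
          have haA' : a ∈ A := (Set.Finite.mem_toFinset _).mp haA
          rcases hWf w hwW with hwB | hwC
          · exact (SimpleGraph.mem_edgeSet G).mpr (hAB a haA' w hwB)
          · exact (SimpleGraph.mem_edgeSet G).mpr (hAC a haA' w hwC)
      · intro t ht
        obtain ⟨a, b, c, haA, hbB, hcC, hat, hbt, hct, hbc⟩ := tri_struct t ht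
        by_cases hbW : b ∈ Wf
        · refine ⟨s(a, b), ⟨a, hat, b, hbt, ?_, rfl⟩, Set.mem_union_right _ ?_⟩
          · intro h; subst h; exact hAB' haA hbB
          · exact Finset.mem_coe.mpr (Finset.mem_image.mpr ⟨(a, b),
              Finset.mem_product.mpr ⟨(Set.Finite.mem_toFinset _).mpr haA, hbW⟩, rfl⟩)
        · by_cases hcW : c ∈ Wf
          · refine ⟨s(a, c), ⟨a, hat, c, hct, ?_, rfl⟩, Set.mem_union_right _ ?_⟩
            · intro h; subst h; exact hAC' haA hcC
            · exact Finset.mem_coe.mpr (Finset.mem_image.mpr ⟨(a, c),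
                Finset.mem_product.mpr ⟨(Set.Finite.mem_toFinset _).mpr haA, hcW⟩, rfl⟩)
          · refine ⟨s(b, c), ⟨b, hbt, c, hct, hbc.ne, rfl⟩, Set.mem_union_left _ ?_⟩
            refine Finset.mem_coe.mpr (Finset.mem_filter.mpr
              ⟨(hmemEHf _).mpr ⟨(SimpleGraph.mem_edgeSet G).mpr hbc, b, hbB, c, hcC, rfl⟩, ?_⟩)
            intro v hv hveq
            rcases Sym2.mem_iff.mp hveq with rfl | rfl
            · exact hbW hv
            · exact hcW hv
    have hcount : (↑T ∪ ↑S : Set (Sym2 V)).ncard ≤ T.card + p * Wf.card := by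
      calc (↑T ∪ ↑S : Set (Sym2 V)).ncard
          ≤ (↑T : Set (Sym2 V)).ncard + (↑S : Set (Sym2 V)).ncard :=
            Set.ncard_union_le _ _
        _ = T.card + S.card := by rw [Set.ncard_coe_finset, Set.ncard_coe_finset]
        _ ≤ T.card + (Af ×ˢ Wf).card := add_le_add_right Finset.card_image_le _
        _ = T.card + p * Wf.card := by rw [Finset.card_product, hAfcard]
    have hτ : triTransversalNum G ≤ (↑T ∪ ↑S : Set (Sym2 V)).ncard :=
      Nat.sInf_le ⟨↑T ∪ ↑S, htrans, rfl⟩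
    omega
  -- maximum p-matching
  have h𝒞ne : ((EHf.powerset).filter (fun Fs => ∀ v, degf Fs v ≤ p)).Nonempty :=
    ⟨∅, Finset.mem_filter.mpr ⟨Finset.empty_mem_powerset _, fun v => by simp [degf]⟩⟩
  obtain ⟨Fm, hFm𝒞, hFmmax'⟩ := Finset.exists_max_image
    ((EHf.powerset).filter (fun Fs => ∀ v, degf Fs v ≤ p)) Finset.card h𝒞ne
  have hFmsub : Fm ⊆ EHf := Finset.mem_powerset.mp (Finset.mem_filter.mp hFm𝒞).1
  have hFmE : ∀ e ∈ Fm, e ∈ EHs := fun e he => (hmemEHf e).mp (hFmsub he)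
  have hFmdeg : ∀ v, degf Fm v ≤ p := (Finset.mem_filter.mp hFm𝒞).2
  have hmax : ∀ F'' : Finset (Sym2 V), (∀ e ∈ F'', e ∈ EHs) →
      (∀ v, degf F'' v ≤ p) → F''.card ≤ Fm.card := by
    intro F'' hsub hdeg
    exact hFmmax' F'' (Finset.mem_filter.mpr
      ⟨Finset.mem_powerset.mpr (fun e he => (hmemEHf e).mpr (hsub e he)), hdeg⟩)
  -- residual relation
  set R : V → V → Prop := fun u v =>
    (u ∈ B ∧ v ∈ C ∧ s(u, v) ∈ EHs ∧ s(u, v) ∉ Fm) ∨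
      (u ∈ C ∧ v ∈ B ∧ s(u, v) ∈ Fm) with hRdef
  -- no augmenting path
  have no_aug : ∀ n : ℕ, ∀ (l : List V) (y : V) (F' : Finset (Sym2 V)) (z : V),
      l.length = n → List.Chain' R (y :: l) → (y :: l).Nodup →
      (∀ e ∈ F', e ∈ EHs) → F'.card = Fm.card → (∀ v, degf F' v ≤ p) →
      y ∈ B → degf F' y < p →
      (∀ e : Sym2 V, ∀ v ∈ l, v ∈ e → (e ∈ F' ↔ e ∈ Fm)) →
      (y :: l).getLast? = some z → z ∈ C → degf Fm z < p → False := by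
    intro n
    induction n using Nat.strong_induction_on with
    | _ n ih =>
      intro l y F' z hlen hchain hnd hFE hFcard hFdeg hyB hydeg hagree hz hzC hzdeg
      rcases l with _ | ⟨c, l2⟩
      · -- l = []
        simp only [List.getLast?_singleton, Option.some.injEq] at hz
        subst hz
        exact hBC' hyB hzC
      rcases l2 with _ | ⟨y', rest⟩
      · -- l = [c]
        rw [List.getLast?_cons_cons, List.getLast?_singleton] at hz
        have hz' : z = c := (Option.some.inj hz).symm
        have hzC2 : c ∈ C := hz' ▸ hzC
        have hzdeg2 : degf Fm c < p := hz' ▸ hzdeg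
        have hRyc : R y c := (List.isChain_cons_cons.mp hchain).1
        rw [hRdef] at hRyc
        rcases hRyc with ⟨-, hcC', heEH, heFm⟩ | ⟨hyC, -, -⟩
        · have hce : c ∈ s(y, c) := by simp
          have hagc : ∀ e : Sym2 V, c ∈ e → (e ∈ F' ↔ e ∈ Fm) :=
            fun e hv => hagree e c (by simp) hv
          have hdegc : degf F' c = degf Fm c := degf_filter_eq hagc
          have heF' : s(y, c) ∉ F' := fun h => heFm ((hagc _ hce).mp h)
          have hcard1 : (insert (s(y, c)) F').card = F'.card + 1 :=
            Finset.card_insert_of_notMem heF'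
          have hsub : ∀ e ∈ insert (s(y, c)) F', e ∈ EHs := by
            intro e he
            rcases Finset.mem_insert.mp he with rfl | he
            · exact heEH
            · exact hFE e he
          have hdeg : ∀ v, degf (insert (s(y, c)) F') v ≤ p := by
            intro v
            by_cases hv : v ∈ s(y, c)
            · have h1 : degf (insert (s(y, c)) F') v ≤ degf F' v + 1 := degf_insert_le
              have h2 : degf F' v < p := by
                rcases Sym2.mem_iff.mp hv with h | h
                · rw [h]; exact hydeg
                · rw [h, hdegc]; exact hzdeg2
              omega
            · rw [degf_insert_of_not_mem_vert hv]; exact hFdeg v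
          have := hmax _ hsub hdeg
          omega
        · exact hBC' hyB hyC
      · -- l = c :: y' :: rest
        have h1 := List.isChain_cons_cons.mp hchain
        have h2 := List.isChain_cons_cons.mp h1.2
        have hRyc := h1.1
        have hRcy' := h2.1
        have hchain' := h2.2
        rw [hRdef] at hRyc hRcy'
        rcases hRyc with ⟨-, hcC, he1EH, he1Fm⟩ | ⟨hyC, -, -⟩
        · rcases hRcy' with ⟨hcB, -, -⟩ | ⟨-, hy'B, he2Fm⟩
          · exact hBC' hcB hcC
          · rw [List.nodup_cons] at hnd
            obtain ⟨hynotin, hnd2⟩ := hnd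
            rw [List.nodup_cons] at hnd2
            obtain ⟨hcnotin, hnd3⟩ := hnd2
            have hyne_y' : y ≠ y' := fun h => hynotin (by rw [h]; simp)
            have hyne_c : y ≠ c := fun h => hynotin (by rw [h]; simp)
            have hcne_y' : c ≠ y' := fun h => hcnotin (by rw [h]; simp)
            have hynotin_rest : y ∉ rest := fun h => hynotin (by simp [h])
            have hcnotin_rest : c ∉ rest := fun h => hcnotin (by simp [h])
            have hy'notin_rest : y' ∉ rest := (List.nodup_cons.mp hnd3).1
            have hmem_e₁ : ∀ v : V, v ∈ s(y, c) ↔ (v = y ∨ v = c) := fun v => Sym2.mem_iff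
            have hmem_e₂ : ∀ v : V, v ∈ s(c, y') ↔ (v = c ∨ v = y') := fun v => Sym2.mem_iff
            have he1F' : s(y, c) ∉ F' := by
              intro h
              exact he1Fm ((hagree _ c (by simp) ((hmem_e₁ c).mpr (Or.inr rfl))).mp h)
            have he2F' : s(c, y') ∈ F' :=
              (hagree _ y' (by simp) ((hmem_e₂ y').mpr (Or.inr rfl))).mpr he2Fm
            have hne12 : s(y, c) ≠ s(c, y') := fun h => he1Fm (h ▸ he2Fm)
            have hF'pos : 1 ≤ F'.card := Finset.card_pos.mpr ⟨_, he2F'⟩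
            have hcard : (insert (s(y, c)) (F'.erase (s(c, y')))).card = F'.card := by
              rw [Finset.card_insert_of_notMem
                  (fun h => he1F' (Finset.mem_of_mem_erase h)),
                Finset.card_erase_of_mem he2F']
              omega
            have hsub : ∀ e ∈ insert (s(y, c)) (F'.erase (s(c, y'))), e ∈ EHs := by
              intro e he
              rcases Finset.mem_insert.mp he with rfl | he
              · exact he1EH
              · exact hFE e (Finset.mem_of_mem_erase he)
            have hdeg'' : ∀ v, degf (insert (s(y, c)) (F'.erase (s(c, y')))) v ≤ p := by
              intro v
              by_cases hv1 : v ∈ s(y, c)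
              · have hin : degf (insert (s(y, c)) (F'.erase (s(c, y')))) v ≤
                    degf (F'.erase (s(c, y'))) v + 1 := degf_insert_le
                by_cases hv2 : v ∈ s(c, y')
                · have h3 := degf_erase_of_mem he2F' hv2
                  have h4 := one_le_degf he2F' hv2
                  have h5 := hFdeg v
                  omega
                · rcases (hmem_e₁ v).mp hv1 with h | h
                  · rw [degf_erase_of_not_mem_vert hv2] at hin
                    have h2 : degf F' v < p := by rw [h]; exact hydeg
                    omega
                  · exact absurd ((hmem_e₂ v).mpr (Or.inl h)) hv2
              · rw [degf_insert_of_not_mem_vert hv1]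
                have h3 := degf_erase_le (F := F') (e := s(c, y')) (v := v)
                have h4 := hFdeg v
                omega
            have hy'deg : degf (insert (s(y, c)) (F'.erase (s(c, y')))) y' < p := by
              have hny'e₁ : y' ∉ s(y, c) := by
                rw [hmem_e₁]
                rintro (rfl | rfl)
                · exact hyne_y' rfl
                · exact hcne_y' rfl
              rw [degf_insert_of_not_mem_vert hny'e₁,
                degf_erase_of_mem he2F' ((hmem_e₂ y').mpr (Or.inr rfl))]
              have h3 := one_le_degf he2F' ((hmem_e₂ y').mpr (Or.inr rfl))
              have h4 := hFdeg y'
              omega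
            have hagree' : ∀ e : Sym2 V, ∀ v ∈ rest, v ∈ e →
                (e ∈ insert (s(y, c)) (F'.erase (s(c, y'))) ↔ e ∈ Fm) := by
              intro e v hvrest hve
              have hne1 : e ≠ s(y, c) := by
                rintro rfl
                rcases (hmem_e₁ v).mp hve with rfl | rfl
                · exact hynotin_rest hvrest
                · exact hcnotin_rest hvrest
              have hne2 : e ≠ s(c, y') := by
                rintro rfl
                rcases (hmem_e₂ v).mp hve with rfl | rfl
                · exact hcnotin_rest hvrest
                · exact hy'notin_rest hvrest
              rw [Finset.mem_insert, Finset.mem_erase]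
              constructor
              · rintro (h | ⟨-, h⟩)
                · exact absurd h hne1
                · exact (hagree e v (by simp [hvrest]) hve).mp h
              · intro h
                exact Or.inr ⟨hne2, (hagree e v (by simp [hvrest]) hve).mpr h⟩
            have hz' : (y' :: rest).getLast? = some z := by
              rw [List.getLast?_cons_cons, List.getLast?_cons_cons] at hz
              exact hz
            have hlen' : rest.length < n := by
              simp only [List.length_cons] at hlen
              omega
            exact ih rest.length hlen' rest y'
              (insert (s(y, c)) (F'.erase (s(c, y')))) z rfl hchain' hnd3 hsub
              (hcard.trans hFcard) hdeg'' hy'B hy'deg hagree' hz' hzC hzdeg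
        · exact hBC' hyB hyC
  -- no exposed C vertex reachable
  have nexp : ∀ c, c ∈ C → degf Fm c < p →
      ∀ b, b ∈ B → degf Fm b < p → ¬ Relation.ReflTransGen R b c := by
    intro c hcC hcdeg b hbB hbdeg hrtg
    obtain ⟨l, hchain, hlast⟩ := List.exists_isChain_cons_of_relationReflTransGen hrtg
    have hchain' : List.Chain' R (b :: l) := hchain
    obtain ⟨m', hc', hnd', hh', hl'⟩ :=
      exists_nodup_chain' R (b :: l).length (b :: l) le_rfl hchain'
    rcases m' with _ | ⟨y, l'⟩
    · simp at hh'
    · have hyb : y = b := by simpa using hh'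
      subst hyb
      have hlast' : (y :: l').getLast? = some c := by
        rw [hl', List.getLast?_eq_getLast (List.cons_ne_nil _ _), hlast]
      exact no_aug l'.length l' y Fm c rfl hc' hnd' hFmE rfl hFmdeg hbB hbdeg
        (fun e v _ _ => Iff.rfl) hlast' hcC hcdeg
  -- the cut
  set Zp : V → Prop :=
    fun v => ∃ b, b ∈ B ∧ degf Fm b < p ∧ Relation.ReflTransGen R b v with hZpdef
  set Wcut : Finset V :=
    Finset.univ.filter (fun v => (v ∈ B ∧ ¬ Zp v) ∨ (v ∈ C ∧ Zp v)) with hWcutdef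
  have hWsub : ∀ w ∈ Wcut, w ∈ B ∪ C := by
    intro w hw
    rcases (Finset.mem_filter.mp hw).2 with ⟨h, -⟩ | ⟨h, -⟩
    exacts [Or.inl h, Or.inr h]
  have hdegW : ∀ w ∈ Wcut, p ≤ degf Fm w := by
    intro w hw
    rcases (Finset.mem_filter.mp hw).2 with ⟨hwB, hnZ⟩ | ⟨hwC, hZ⟩
    · by_contra hlt
      push_neg at hlt
      refine hnZ ?_
      rw [hZpdef]
      exact ⟨w, hwB, hlt, Relation.ReflTransGen.refl⟩
    · by_contra hlt
      push_neg at hlt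
      rw [hZpdef] at hZ
      obtain ⟨b, hbB, hbd, hrtg⟩ := hZ
      exact nexp w hwC hlt b hbB hbd hrtg
  have hTfFm : EHf.filter (fun e => ∀ v ∈ Wcut, ¬ v ∈ e) ⊆ Fm := by
    intro e he
    obtain ⟨heE, havoid⟩ := Finset.mem_filter.mp he
    obtain ⟨b, c, hbB, hcC, rfl⟩ := edge_struct e ((hmemEHf e).mp heE)
    have hbget : b ∉ Wcut := fun h => havoid b h (by simp)
    have hcget : c ∉ Wcut := fun h => havoid c h (by simp)
    have hbZ : Zp b := by
      by_contra h
      exact hbget (Finset.mem_filter.mpr ⟨Finset.mem_univ _, Or.inl ⟨hbB, h⟩⟩)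
    have hcnZ : ¬ Zp c :=
      fun h => hcget (Finset.mem_filter.mpr ⟨Finset.mem_univ _, Or.inr ⟨hcC, h⟩⟩)
    by_contra heFm
    rw [hZpdef] at hbZ hcnZ
    obtain ⟨b₀, hb1, hb2, hb3⟩ := hbZ
    refine hcnZ ⟨b₀, hb1, hb2, hb3.tail ?_⟩
    rw [hRdef]
    exact Or.inl ⟨hbB, hcC, (hmemEHf _).mp heE, heFm⟩
  have hdisjU : ∀ w ∈ Wcut, ∀ w' ∈ Wcut, w ≠ w' →
      Disjoint (Fm.filter (fun e => w ∈ e)) (Fm.filter (fun e => w' ∈ e)) := by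
    intro w hw w' hw' hne
    rw [Finset.disjoint_left]
    intro e hew hew'
    obtain ⟨heFm, hwe⟩ := Finset.mem_filter.mp hew
    obtain ⟨-, hw'e⟩ := Finset.mem_filter.mp hew'
    obtain ⟨b, c, hbB, hcC, rfl⟩ := edge_struct e (hFmE e heFm)
    have hbc_in : b ∈ Wcut ∧ c ∈ Wcut := by
      rcases Sym2.mem_iff.mp hwe with rfl | rfl <;>
        rcases Sym2.mem_iff.mp hw'e with rfl | rfl
      · exact absurd rfl hne
      · exact ⟨hw, hw'⟩
      · exact ⟨hw', hw⟩
      · exact absurd rfl hne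
    obtain ⟨hbW, hcW⟩ := hbc_in
    have hbnZ : ¬ Zp b := by
      rcases (Finset.mem_filter.mp hbW).2 with ⟨-, h⟩ | ⟨hbC, -⟩
      · exact h
      · exact (hBC' hbB hbC).elim
    have hcZ : Zp c := by
      rcases (Finset.mem_filter.mp hcW).2 with ⟨hcB, -⟩ | ⟨-, h⟩
      · exact (hBC' hcB hcC).elim
      · exact h
    rw [hZpdef] at hcZ hbnZ
    obtain ⟨b₀, hb1, hb2, hb3⟩ := hcZ
    have hRcb : R c b := by
      rw [hRdef]
      exact Or.inr ⟨hcC, hbB, by rw [Sym2.eq_swap]; exact heFm⟩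
    exact hbnZ ⟨b₀, hb1, hb2, hb3.tail hRcb⟩
  have hcount : p * Wcut.card + (EHf.filter (fun e => ∀ v ∈ Wcut, ¬ v ∈ e)).card
      ≤ Fm.card := by
    have hU : (Wcut.biUnion (fun w => Fm.filter (fun e => w ∈ e))).card
        = ∑ w ∈ Wcut, (Fm.filter (fun e => w ∈ e)).card :=
      Finset.card_biUnion hdisjU
    have hsum : p * Wcut.card ≤ ∑ w ∈ Wcut, (Fm.filter (fun e => w ∈ e)).card := by
      have h := Finset.card_nsmul_le_sum Wcut
        (fun w => (Fm.filter (fun e => w ∈ e)).card) p (fun w hw => hdegW w hw)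
      simpa [mul_comm] using h
    have hUsub : Wcut.biUnion (fun w => Fm.filter (fun e => w ∈ e)) ⊆ Fm := by
      intro e he
      obtain ⟨w, -, he⟩ := Finset.mem_biUnion.mp he
      exact (Finset.mem_filter.mp he).1
    have hdisjT : Disjoint (Wcut.biUnion (fun w => Fm.filter (fun e => w ∈ e)))
        (EHf.filter (fun e => ∀ v ∈ Wcut, ¬ v ∈ e)) := by
      rw [Finset.disjoint_left]
      intro e he heT
      obtain ⟨w, hw, he⟩ := Finset.mem_biUnion.mp he
      exact (Finset.mem_filter.mp heT).2 w hw (Finset.mem_filter.mp he).2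
    calc p * Wcut.card + (EHf.filter (fun e => ∀ v ∈ Wcut, ¬ v ∈ e)).card
        ≤ (Wcut.biUnion (fun w => Fm.filter (fun e => w ∈ e))).card +
            (EHf.filter (fun e => ∀ v ∈ Wcut, ¬ v ∈ e)).card := by
          rw [hU]; omega
      _ = ((Wcut.biUnion (fun w => Fm.filter (fun e => w ∈ e))) ∪
            (EHf.filter (fun e => ∀ v ∈ Wcut, ¬ v ∈ e))).card :=
          (Finset.card_union_of_disjoint hdisjT).symm
      _ ≤ Fm.card := Finset.card_le_card (Finset.union_subset hUsub hTfFm)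
  have hfinal : triTransversalNum G ≤ Fm.card :=
    le_trans (lemA Wcut hWsub) hcount
  obtain ⟨Fs, hFsub, hFscard⟩ := Finset.exists_subset_card_eq hfinal
  refine ⟨↑Fs, ?_, ?_, ?_⟩
  · intro e he
    exact hFmE e (hFsub he)
  · rw [Set.ncard_coe_finset, hFscard]
  · intro v
    rw [ncard_sep_coe]
    calc degf Fs v ≤ degf Fm v := degf_mono hFsub
      _ ≤ p := hFmdeg v
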